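/- Let K and K' be the simplicial complexes on disjoint vertex copies with facets K = {{1,2,4,5},{1,3,6,7},{2,3,8,9},{1,2,3,10}} and K' = {{1,2,5,6},{1,3,7,8},{1,4,9,10},{1,2,3,4}}. Then K and K' are both 4-pure clique complexes with the same facet-adjacency matrix (in some ordering of facets), but K and K' are not isomorphic. -/
import Mathlib
set_option maxRecDepth 10000

private def Fv : Fin 4 → Finset ℕ := ![{1,2,4,5}, {1,3,6,7}, {2,3,8,9}, {1,2,3,10}]
private def Gv : Fin 4 → Finset ℕ := ![{1,2,5,6}, {1,3,7,8}, {1,4,9,10}, {1,2,3,4}]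

private lemma flagF : ∀ A : Finset ℕ,
    (∀ a ∈ A, ∀ b ∈ A, ∃ i : Fin 4, ({a, b} : Finset ℕ) ⊆ Fv i) → ∃ i, A ⊆ Fv i := by
  intro A hA
  by_cases h3 : A ⊆ Fv 3
  · exact ⟨3, h3⟩
  · obtain ⟨v, hv, hv3⟩ := Finset.not_subset.1 h3
    obtain ⟨i, hi⟩ := hA v hv v hv
    have hvi : v ∈ Fv i := hi (Finset.mem_insert_self _ _)
    refine ⟨i, fun b hb => ?_⟩
    obtain ⟨j, hj⟩ := hA v hv b hb
    have hvj : v ∈ Fv j := hj (Finset.mem_insert_self _ _)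
    have hbj : b ∈ Fv j := hj (by simp)
    have hji : j = i := by
      clear hA hi hj h3 hv hb
      fin_cases i <;> fin_cases j <;> simp_all [Fv] <;> omega
    rwa [hji] at hbj

private lemma flagG : ∀ A : Finset ℕ,
    (∀ a ∈ A, ∀ b ∈ A, ∃ i : Fin 4, ({a, b} : Finset ℕ) ⊆ Gv i) → ∃ i, A ⊆ Gv i := by
  intro A hA
  by_cases h3 : A ⊆ Gv 3
  · exact ⟨3, h3⟩
  · obtain ⟨v, hv, hv3⟩ := Finset.not_subset.1 h3
    obtain ⟨i, hi⟩ := hA v hv v hv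
    have hvi : v ∈ Gv i := hi (Finset.mem_insert_self _ _)
    refine ⟨i, fun b hb => ?_⟩
    obtain ⟨j, hj⟩ := hA v hv b hb
    have hvj : v ∈ Gv j := hj (Finset.mem_insert_self _ _)
    have hbj : b ∈ Gv j := hj (by simp)
    have hji : j = i := by
      clear hA hi hj h3 hv hb
      fin_cases i <;> fin_cases j <;> simp_all [Gv] <;> omega
    rwa [hji] at hbj

/-- the two concrete complexes with facets
`K = {{1,2,4,5},{1,3,6,7},{2,3,8,9},{1,2,3,10}}` and
`K' = {{1,2,5,6},{1,3,7,8},{1,4,9,10},{1,2,3,4}}` are both 4-pure clique complexes with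
the same facet-adjacency matrix (for some ordering of facets), yet they are not isomorphic. -/
theorem stmt10 (F G : Fin 4 → Finset ℕ)
    (hF : F = ![{1,2,4,5}, {1,3,6,7}, {2,3,8,9}, {1,2,3,10}])
    (hG : G = ![{1,2,5,6}, {1,3,7,8}, {1,4,9,10}, {1,2,3,4}]) :
    -- 4-pure
    (∀ i, (F i).card = 4) ∧ (∀ i, (G i).card = 4) ∧
    -- both generated complexes are clique (flag) complexes
    (∀ A : Finset ℕ,
      (∀ a ∈ A, ∀ b ∈ A, ∃ i, ({a, b} : Finset ℕ) ⊆ F i) → ∃ i, A ⊆ F i) ∧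
    (∀ A : Finset ℕ,
      (∀ a ∈ A, ∀ b ∈ A, ∃ i, ({a, b} : Finset ℕ) ⊆ G i) → ∃ i, A ⊆ G i) ∧
    -- same facet-adjacency matrix, in some ordering of the facets
    (∃ σ : Fin 4 ≃ Fin 4, ∀ i j, (F i ∩ F j).card = (G (σ i) ∩ G (σ j)).card) ∧
    -- not isomorphic
    ¬ ∃ (φ : ℕ → ℕ) (σ : Fin 4 ≃ Fin 4),
        Set.InjOn φ (⋃ i, (F i : Set ℕ)) ∧ ∀ i, (F i).image φ = G (σ i) := by
  have hF' : F = Fv := hF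
  have hG' : G = Gv := hG
  subst hF' hG'
  refine ⟨by decide, by decide, ?_, ?_, ⟨Equiv.refl _, by decide⟩, ?_⟩
  · exact flagF
  · exact flagG
  · rintro ⟨φ, σ, hinj, hmap⟩
    have hone : ∀ j : Fin 4, (1 : ℕ) ∈ Gv j := by decide
    have h1 : ∀ i : Fin 4, ∃ a ∈ Fv i, φ a = 1 := by
      intro i
      have := hone (σ i)
      rw [← hmap i, Finset.mem_image] at this
      exact this
    obtain ⟨a, ha0, hφa⟩ := h1 0
    obtain ⟨b, hb1, hφb⟩ := h1 1
    obtain ⟨c, hc2, hφc⟩ := h1 2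
    have hab : a = b := hinj (Set.mem_iUnion.2 ⟨0, ha0⟩) (Set.mem_iUnion.2 ⟨1, hb1⟩)
      (hφa.trans hφb.symm)
    have hac : a = c := hinj (Set.mem_iUnion.2 ⟨0, ha0⟩) (Set.mem_iUnion.2 ⟨2, hc2⟩)
      (hφa.trans hφc.symm)
    subst hab; subst hac
    simp [Fv] at ha0 hb1 hc2
    omega
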